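/- Let (ω_k)_{k∈ℤ} be a nondecreasing sequence of real numbers satisfying ω_{k+M} − ω_k ≥ Mγ' for all k ∈ ℤ (for some positive integer M and γ' > 0), let I = (a,b) be a bounded interval, γ_n := 2π|I|⁻¹ n, and let f_k = [ω_m, …, ω_k] be a divided difference function associated to a γ'-close exponent chain ω_m, …, ω_{m+j−1} of the sequence (m ≤ k ≤ m+j−1). Then there is a constant C depending only on γ', M and I such that for all n with γ_n ≠ ω_k, |∫_I f_k(t) e^{−iγ_n t} dt| ≤ C / |ω_k − γ_n|. -/

import Mathlib

open MeasureTheory Complex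

noncomputable section

/-- The iterated integral `∫₀ᵘ e^{itd₁s₁} ∫₀^{s₁} e^{itd₂s₂} ⋯ ds₂ ds₁` appearing in the
divided differences of exponentials (Hermite–Genocchi formula). -/
def nestInt (t : ℝ) : List ℝ → ℝ → ℂ
  | [], _ => 1
  | d :: ds, u => ∫ s in (0:ℝ)..u, Complex.exp (Complex.I * t * d * s) * nestInt t ds s

/-- Consecutive differences `[μ₂ - μ₁, μ₃ - μ₂, …]` of a list `[μ₁, μ₂, …]`. -/
def consecDiffs : List ℝ → List ℝ
  | [] => []
  | [_] => []
  | x :: y :: rest => (y - x) :: consecDiffs (y :: rest)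

/-- The divided difference
`[μ₁,…,μ_r](t) = (it)^{r-1} ∫₀¹∫₀^{s₁}⋯∫₀^{s_{r-2}}
  exp(i[s_{r-1}(μ_r - μ_{r-1}) + ⋯ + s₁(μ₂ - μ₁) + μ₁]t) ds_{r-1}⋯ds₁`,
here defined via the equivalent iterated-integral (nested) form. -/
def divDiff (t : ℝ) : List ℝ → ℂ
  | [] => 0
  | m :: rest => (Complex.I * t) ^ rest.length * Complex.exp (Complex.I * m * t) *
      nestInt t (consecDiffs (m :: rest)) 1


def K : List ℝ → ℝ → ℂ
  | [], _ => 1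
  | x :: ds, t => ∫ s in (0:ℝ)..t, Complex.exp (Complex.I * x * s) * K ds s

lemma K_cons (x : ℝ) (ds : List ℝ) (t : ℝ) :
    K (x :: ds) t = ∫ s in (0:ℝ)..t, Complex.exp (Complex.I * x * s) * K ds s := rfl

lemma primitive_hasDerivAt {f : ℝ → ℂ} (hf : Continuous f) (t : ℝ) :
    HasDerivAt (fun u => ∫ s in (0:ℝ)..u, f s) (f t) t :=
  intervalIntegral.integral_hasDerivAt_right (hf.intervalIntegrable _ _)
    hf.stronglyMeasurable.stronglyMeasurableAtFilter hf.continuousAt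

lemma cont_exp_Ix (x : ℝ) : Continuous fun s : ℝ => Complex.exp (Complex.I * x * s) := by
  fun_prop

lemma K_cont : ∀ d : List ℝ, Continuous (K d)
  | [] => continuous_const
  | x :: ds => by
    have hc : Continuous fun s : ℝ => Complex.exp (Complex.I * x * s) * K ds s :=
      (cont_exp_Ix x).mul (K_cont ds)
    have h : ∀ t : ℝ, HasDerivAt (fun u => K (x :: ds) u)
        (Complex.exp (Complex.I * x * t) * K ds t) t := by
      intro t
      simpa only [K_cons] using primitive_hasDerivAt hc t
    exact (Differentiable.continuous fun t => (h t).differentiableAt)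

lemma K_hasDerivAt (x : ℝ) (ds : List ℝ) (t : ℝ) :
    HasDerivAt (K (x :: ds)) (Complex.exp (Complex.I * x * t) * K ds t) t := by
  have hc : Continuous fun s : ℝ => Complex.exp (Complex.I * x * s) * K ds s :=
    (cont_exp_Ix x).mul (K_cont ds)
  exact primitive_hasDerivAt hc t

lemma K_zero (x : ℝ) (ds : List ℝ) : K (x :: ds) 0 = 0 := by
  simp [K_cons]

lemma K_norm_le : ∀ (d : List ℝ) (t : ℝ), ‖K d t‖ ≤ |t| ^ d.length
  | [], t => by simp [K]
  | x :: ds, t => by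
    have hb : ∀ s ∈ Set.uIoc (0:ℝ) t,
        ‖Complex.exp (Complex.I * x * s) * K ds s‖ ≤ |t| ^ ds.length := by
      intro s hs
      have hst : |s| ≤ |t| := by
        have h1 : min 0 t < s := hs.1
        have h2 : s ≤ max 0 t := hs.2
        have h3 : max 0 t ≤ |t| := max_le (abs_nonneg t) (le_abs_self t)
        have h4 : -|t| ≤ min 0 t :=
          le_min (neg_nonpos_of_nonneg (abs_nonneg t)) (neg_abs_le t)
        rw [abs_le]; constructor <;> linarith
      have hexp : ‖Complex.exp (Complex.I * x * s)‖ = 1 := by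
        rw [Complex.norm_exp]
        simp
      rw [norm_mul, hexp, one_mul]
      exact le_trans (K_norm_le ds s) (pow_le_pow_left₀ (abs_nonneg s) hst _)
    have h := intervalIntegral.norm_integral_le_of_norm_le_const hb
    rw [← K_cons] at h
    simpa [pow_succ, sub_zero] using h

lemma hasDerivAt_cexp_real (c : ℂ) (t : ℝ) :
    HasDerivAt (fun u : ℝ => Complex.exp (c * u)) (c * Complex.exp (c * t)) t := by
  have h : HasDerivAt (fun u : ℝ => c * (u : ℂ)) c t := by
    simpa using (Complex.ofRealCLM.hasDerivAt (x := t)).const_mul c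
  simpa [mul_comm] using h.cexp

lemma hasDerivAt_exp_Ix (x : ℝ) (t : ℝ) :
    HasDerivAt (fun u : ℝ => Complex.exp (Complex.I * x * u))
      (Complex.I * x * Complex.exp (Complex.I * x * t)) t :=
  hasDerivAt_cexp_real (Complex.I * x) t

lemma eq_of_hasDerivAt_eq {f g d : ℝ → ℂ} (hf : ∀ t, HasDerivAt f (d t) t)
    (hg : ∀ t, HasDerivAt g (d t) t) (h0 : f 0 = g 0) (t : ℝ) : f t = g t := by
  have hdiff : Differentiable ℝ (f - g) := fun u => ((hf u).sub (hg u)).differentiableAt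
  have hz : ∀ u, deriv (f - g) u = 0 := by
    intro u
    have hD : HasDerivAt (f - g) (d u - d u) u := (hf u).sub (hg u)
    rw [hD.deriv]
    ring
  have h := is_const_of_deriv_eq_zero hdiff hz t 0
  have h' : f t - g t = f 0 - g 0 := by simpa using h
  have := sub_eq_zero.2 h0
  have : f t - g t = 0 := by rw [h', this]
  linear_combination this

lemma K_sub_eq : ∀ (ds : List ℝ) (x : ℝ) (t : ℝ),
    K ((x :: ds).dropLast) t =
      -Complex.I * (x + ds.sum) * K (x :: ds) t + Complex.exp (Complex.I * x * t) * K ds t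
  | [], x, t => by
    rcases eq_or_ne x 0 with rfl | hx
    · simp [K]
    · have hc : (Complex.I * x : ℂ) ≠ 0 :=
        mul_ne_zero Complex.I_ne_zero (Complex.ofReal_ne_zero.2 hx)
      have hK : K [x] t = (Complex.exp (Complex.I * x * t) - 1) / (Complex.I * x) := by
        rw [K_cons]
        simp only [K, mul_one]
        rw [integral_exp_mul_complex hc]
        simp
      rw [show ([x] : List ℝ).dropLast = [] from rfl, hK]
      simp only [K, List.sum_nil, Complex.ofReal_zero, add_zero]
      have hx' : (x : ℂ) ≠ 0 := Complex.ofReal_ne_zero.2 hx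
      field_simp
      ring
  | y :: ds', x, t => by
    have IH := K_sub_eq ds' y
    -- prove by comparing derivatives
    have key : ∀ u : ℝ,
        (fun u : ℝ => -Complex.I * (x + (y :: ds').sum) * K (x :: y :: ds') u
            + Complex.exp (Complex.I * x * u) * K (y :: ds') u) u
          = (fun u : ℝ => K (x :: (y :: ds').dropLast) u) u := by
      refine eq_of_hasDerivAt_eq
        (d := fun u => Complex.exp (Complex.I * x * u) * K ((y :: ds').dropLast) u)
        (fun u => ?_) (fun u => ?_) ?_
      · have h1 := (K_hasDerivAt x (y :: ds') u).const_mul (-Complex.I * (x + (y :: ds').sum))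
        have h2 := (hasDerivAt_exp_Ix x u).mul (K_hasDerivAt y ds' u)
        have h3 := h1.add h2
        convert h3 using 1
        · rfl
        · rfl
        simp only [IH, List.sum_cons]
        push_cast
        ring
      · exact K_hasDerivAt x ((y :: ds').dropLast) u
      · simp [K_zero]
    have h := key t
    simpa using h.symm


lemma nest_eq_K : ∀ (d : List ℝ) (t u : ℝ),
    (t : ℂ) ^ d.length * nestInt t d u = K d (t * u)
  | [], t, u => by simp [nestInt, K]
  | x :: ds, t, u => by
    rcases eq_or_ne t 0 with rfl | ht
    · simp [nestInt, K_cons, List.length_cons]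
    · have hcongr : ∀ s : ℝ,
          (t : ℂ) ^ ds.length * (Complex.exp (Complex.I * t * x * s) * nestInt t ds s)
            = Complex.exp (Complex.I * x * ((t * s : ℝ) : ℂ)) * K ds (t * s) := by
        intro s
        rw [← nest_eq_K ds t s,
          show (Complex.I * ↑x * ((t * s : ℝ) : ℂ)) = Complex.I * ↑t * ↑x * ↑s by
            push_cast; ring]
        ring
      have step1 : (t : ℂ) ^ (x :: ds).length * nestInt t (x :: ds) u
          = (t : ℂ) * ∫ s in (0:ℝ)..u,
              (t : ℂ) ^ ds.length * (Complex.exp (Complex.I * t * x * s) * nestInt t ds s) := by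
        rw [intervalIntegral.integral_const_mul]
        simp only [nestInt, List.length_cons, pow_succ]
        ring
      rw [step1]
      simp only [hcongr]
      rw [intervalIntegral.integral_comp_mul_left
        (fun σ : ℝ => Complex.exp (Complex.I * x * σ) * K ds σ) ht]
      rw [K_cons]
      rw [Complex.real_smul]
      push_cast
      rw [← mul_assoc, mul_inv_cancel₀ (Complex.ofReal_ne_zero.2 ht), one_mul, mul_zero]

lemma consecDiffs_range' (g : ℕ → ℝ) : ∀ (n k : ℕ),
    consecDiffs ((List.range' k (n+1)).map g)
      = (List.range' k n).map (fun i => g (i+1) - g i)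
  | 0, k => by simp [consecDiffs]
  | n+1, k => by
    have IH := consecDiffs_range' g n (k+1)
    rw [List.range'_succ, List.map_cons, List.range'_succ (s := k+1), List.map_cons]
    rw [show consecDiffs (g k :: g (k+1) :: (List.range' (k+2) n).map g)
        = (g (k+1) - g k) :: consecDiffs (g (k+1) :: (List.range' (k+2) n).map g) from rfl]
    rw [← List.map_cons]
    rw [show ((k+1) :: List.range' (k+2) n) = List.range' (k+1) (n+1) from by
          rw [List.range'_succ],
        IH, List.range'_succ (s := k), List.map_cons]

lemma sum_diffs (g : ℕ → ℝ) : ∀ (n k : ℕ),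
    ((List.range' k n).map (fun i => g (i+1) - g i)).sum = g (k+n) - g k
  | 0, k => by simp
  | n+1, k => by
    rw [List.range'_succ, List.map_cons, List.sum_cons, sum_diffs g n (k+1),
      show k + 1 + n = k + (n+1) by omega]
    ring

lemma norm_exp_Ixt (x t : ℝ) : ‖Complex.exp (Complex.I * x * t)‖ = 1 := by
  rw [Complex.norm_exp]
  simp

lemma norm_exp_negIxt (x t : ℝ) : ‖Complex.exp (-Complex.I * x * t)‖ = 1 := by
  rw [Complex.norm_exp]
  simp

lemma divDiff_eq (g : ℕ → ℝ) (p : ℕ) (t : ℝ) :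
    divDiff t ((List.range (p+1)).map g)
      = Complex.I ^ p * Complex.exp (Complex.I * g 0 * t)
          * K ((List.range p).map fun i => g (i+1) - g i) t := by
  have hlist : (List.range (p+1)).map g = g 0 :: (List.range' 1 p).map g := by
    rw [List.range_eq_range', List.range'_succ, List.map_cons]
  have hcd : consecDiffs ((List.range (p+1)).map g)
      = (List.range p).map fun i => g (i+1) - g i := by
    rw [List.range_eq_range', List.range_eq_range' (n := p), consecDiffs_range' g p 0]
  have hlen : ((List.range p).map fun i => g (i+1) - g i).length = p := by simp
  have hnk := nest_eq_K ((List.range p).map fun i => g (i+1) - g i) t 1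
  rw [hlen, mul_one] at hnk
  rw [hlist]
  simp only [divDiff]
  rw [← hlist, hcd, List.length_map, List.length_range', mul_pow, ← hnk]
  ring

lemma divDiff_cont (g : ℕ → ℝ) (p : ℕ) :
    Continuous fun u : ℝ => divDiff u ((List.range p).map g) := by
  cases p with
  | zero => simpa [divDiff] using continuous_const (y := (0:ℂ))
  | succ q =>
    simp only [divDiff_eq]
    exact (continuous_const.mul (cont_exp_Ix (g 0))).mul (K_cont _)

lemma divDiff_norm (g : ℕ → ℝ) (p : ℕ) (t : ℝ) :
    ‖divDiff t ((List.range p).map g)‖ ≤ (1 + |t|) ^ p := by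
  cases p with
  | zero => simp [divDiff]
  | succ q =>
    rw [divDiff_eq]
    rw [norm_mul, norm_mul, norm_pow, Complex.norm_I, one_pow, one_mul, norm_exp_Ixt, one_mul]
    have h1 : ‖K ((List.range q).map fun i => g (i+1) - g i) t‖ ≤ |t| ^ q := by
      have := K_norm_le ((List.range q).map fun i => g (i+1) - g i) t
      simpa using this
    have h2 : |t| ^ q ≤ (1 + |t|) ^ q :=
      pow_le_pow_left₀ (abs_nonneg t) (by linarith [abs_nonneg t]) q
    have h3 : (1 + |t|) ^ q ≤ (1 + |t|) ^ (q + 1) :=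
      pow_le_pow_right₀ (by linarith [abs_nonneg t]) (Nat.le_succ q)
    linarith

lemma hasDerivAt_divDiff (g : ℕ → ℝ) (p : ℕ) (t : ℝ) :
    HasDerivAt
      (fun u : ℝ => divDiff u ((List.range (p+1)).map g)
        * Complex.exp (-Complex.I * g p * u))
      (Complex.I * divDiff t ((List.range p).map g)
        * Complex.exp (-Complex.I * g p * t)) t := by
  cases p with
  | zero =>
    have hfun : (fun u : ℝ => divDiff u ((List.range 1).map g)
        * Complex.exp (-Complex.I * g 0 * u)) = fun _ => 1 := by
      funext u
      simp only [List.range_succ, List.range_zero, List.nil_append, List.map_cons, List.map_nil,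
        divDiff, consecDiffs, nestInt, List.length_nil, pow_zero, one_mul, mul_one]
      rw [← Complex.exp_add,
        show Complex.I * (g 0 : ℝ) * (u : ℝ) + -Complex.I * (g 0 : ℝ) * (u : ℝ) = 0 by ring,
        Complex.exp_zero]
    rw [hfun]
    have hz : Complex.I * divDiff t ((List.range 0).map g)
        * Complex.exp (-Complex.I * g 0 * t) = 0 := by
      simp [divDiff]
    rw [hz]
    exact hasDerivAt_const t 1
  | succ q =>
    have hDcons : (List.range (q+1)).map (fun i => g (i+1) - g i)
        = (g 1 - g 0) :: (List.range' 1 q).map (fun i => g (i+1) - g i) := by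
      rw [List.range_eq_range', List.range'_succ, List.map_cons]
    simp only [divDiff_eq]
    have h_e1 := hasDerivAt_exp_Ix (g 0) t
    have h_c := h_e1.const_mul (Complex.I ^ (q+1))
    have h_K : HasDerivAt (K ((List.range (q+1)).map fun i => g (i+1) - g i))
        (Complex.exp (Complex.I * (g 1 - g 0 : ℝ) * t)
          * K ((List.range' 1 q).map fun i => g (i+1) - g i) t) t := by
      rw [hDcons]
      exact K_hasDerivAt _ _ t
    have h_p1 := h_c.mul h_K
    have h_e2 := hasDerivAt_cexp_real (-Complex.I * (g (q+1) : ℝ)) t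
    have h_all := h_p1.mul h_e2
    convert h_all using 1
    · rfl
    · rfl
    have hKsub := K_sub_eq ((List.range' 1 q).map fun i => g (i+1) - g i) (g 1 - g 0) t
    rw [← hDcons] at hKsub
    have hdrop : (((List.range (q+1)).map fun i => g (i+1) - g i).dropLast)
        = (List.range q).map fun i => g (i+1) - g i := by
      rw [List.range_succ]
      simp
    rw [hdrop] at hKsub
    have hsum : (g 1 - g 0) + ((List.range' 1 q).map fun i => g (i+1) - g i).sum
        = g (q+1) - g 0 := by
      have h := sum_diffs g (q+1) 0
      rw [← List.range_eq_range', hDcons, List.sum_cons] at h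
      simpa using h
    have hsumC : ((g 1 - g 0 : ℝ) : ℂ)
          + (((List.range' 1 q).map fun i => g (i+1) - g i).sum : ℝ)
        = ((g (q+1) : ℝ) : ℂ) - ((g 0 : ℝ) : ℂ) := by
      have := congrArg (fun r : ℝ => (r : ℂ)) hsum
      push_cast at this
      push_cast
      linear_combination this
    rw [hKsub, hsumC, pow_succ]
    push_cast
    simp only [Pi.mul_apply]
    ring

lemma ibp_bound {F G : ℝ → ℂ} {a b δ B : ℝ} (hab : a ≤ b) (hδ : δ ≠ 0) (hB : 0 ≤ B)
    (hFG : ∀ t, HasDerivAt F (G t) t) (hGc : Continuous G)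
    (hFb : ∀ t ∈ Set.Icc a b, ‖F t‖ ≤ B) (hGb : ∀ t ∈ Set.Icc a b, ‖G t‖ ≤ B) :
    ‖∫ t in a..b, F t * Complex.exp (Complex.I * δ * t)‖ ≤ (2 * B + (b - a) * B) / |δ| := by
  have hFc : Continuous F := Differentiable.continuous fun t => (hFG t).differentiableAt
  have hc : (Complex.I * δ : ℂ) ≠ 0 :=
    mul_ne_zero Complex.I_ne_zero (Complex.ofReal_ne_zero.2 hδ)
  have hEc : Continuous fun t : ℝ => Complex.exp (Complex.I * δ * t) := cont_exp_Ix δ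
  have hFE : ∀ t : ℝ, HasDerivAt (fun u : ℝ => F u * Complex.exp (Complex.I * δ * u))
      (G t * Complex.exp (Complex.I * δ * t)
        + F t * (Complex.I * δ * Complex.exp (Complex.I * δ * t))) t :=
    fun t => (hFG t).mul (hasDerivAt_exp_Ix δ t)
  have hIG : IntervalIntegrable (fun t : ℝ => G t * Complex.exp (Complex.I * δ * t))
      volume a b := (hGc.mul hEc).intervalIntegrable _ _
  have hIF : IntervalIntegrable
      (fun t : ℝ => F t * (Complex.I * δ * Complex.exp (Complex.I * δ * t)))
      volume a b := (hFc.mul (continuous_const.mul hEc)).intervalIntegrable _ _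
  have hInt := intervalIntegral.integral_eq_sub_of_hasDerivAt (f := fun u : ℝ =>
      F u * Complex.exp (Complex.I * δ * u)) (fun t _ => hFE t) (hIG.add hIF)
  rw [intervalIntegral.integral_add hIG hIF] at hInt
  have h2 : (∫ t in a..b, F t * (Complex.I * δ * Complex.exp (Complex.I * δ * t)))
      = Complex.I * δ * ∫ t in a..b, F t * Complex.exp (Complex.I * δ * t) := by
    rw [← intervalIntegral.integral_const_mul]
    apply intervalIntegral.integral_congr
    intro t _
    ring
  rw [h2] at hInt
  have key : Complex.I * δ * ∫ t in a..b, F t * Complex.exp (Complex.I * δ * t)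
      = F b * Complex.exp (Complex.I * δ * b) - F a * Complex.exp (Complex.I * δ * a)
        - ∫ t in a..b, G t * Complex.exp (Complex.I * δ * t) := by
    rw [← hInt]; ring
  have hGI : ‖∫ t in a..b, G t * Complex.exp (Complex.I * δ * t)‖ ≤ B * |b - a| := by
    apply intervalIntegral.norm_integral_le_of_norm_le_const
    intro t ht
    rw [Set.uIoc_of_le hab] at ht
    have htI : t ∈ Set.Icc a b := ⟨le_of_lt ht.1, ht.2⟩
    rw [norm_mul, norm_exp_Ixt, mul_one]
    exact hGb t htI
  have hnorm : ‖Complex.I * δ * ∫ t in a..b, F t * Complex.exp (Complex.I * δ * t)‖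
      = |δ| * ‖∫ t in a..b, F t * Complex.exp (Complex.I * δ * t)‖ := by
    rw [norm_mul, norm_mul, Complex.norm_I, one_mul, Complex.norm_real, Real.norm_eq_abs]
  have hRHS : ‖F b * Complex.exp (Complex.I * δ * b) - F a * Complex.exp (Complex.I * δ * a)
      - ∫ t in a..b, G t * Complex.exp (Complex.I * δ * t)‖ ≤ 2 * B + (b - a) * B := by
    have hb' : ‖F b * Complex.exp (Complex.I * δ * b)‖ ≤ B := by
      rw [norm_mul, norm_exp_Ixt, mul_one]
      exact hFb b ⟨hab, le_refl b⟩
    have ha' : ‖F a * Complex.exp (Complex.I * δ * a)‖ ≤ B := by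
      rw [norm_mul, norm_exp_Ixt, mul_one]
      exact hFb a ⟨le_refl a, hab⟩
    have habs : |b - a| = b - a := abs_of_nonneg (by linarith)
    calc ‖_ - _ - _‖ ≤ ‖F b * Complex.exp (Complex.I * δ * b)
            - F a * Complex.exp (Complex.I * δ * a)‖
          + ‖∫ t in a..b, G t * Complex.exp (Complex.I * δ * t)‖ := norm_sub_le _ _
      _ ≤ (‖F b * Complex.exp (Complex.I * δ * b)‖
            + ‖F a * Complex.exp (Complex.I * δ * a)‖) + B * |b - a| :=
          add_le_add (norm_sub_le _ _) hGI
      _ ≤ 2 * B + (b - a) * B := by rw [habs]; linarith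
  have hfin : |δ| * ‖∫ t in a..b, F t * Complex.exp (Complex.I * δ * t)‖
      ≤ 2 * B + (b - a) * B := by
    rw [← hnorm, key]
    exact hRHS
  rw [← le_div_iff₀' (abs_pos.2 hδ)] at hfin
  exact hfin

/-- Under the weakened gap condition `ω_{k+M} - ω_k ≥ Mγ'`, there is a constant `C`
(depending only on `γ'`, `M` and `I = (a,b)`) such that for every divided difference
`f_k = [ω_m, …, ω_k]` associated to a `γ'`-close exponent chain `ω_m, …, ω_{m+j-1}`
(with `k = m + p`, `p ≤ j-1`) and every `n` with `γ_n = 2πn/|I| ≠ ω_k`,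
`|∫_I f_k(t) e^{-iγ_n t} dt| ≤ C / |ω_k - γ_n|`. -/
theorem stmt14 (ω : ℤ → ℝ) (hmono : Monotone ω)
    (M : ℕ) (hM : 0 < M) (γ' : ℝ) (hγ' : 0 < γ')
    (hgap : ∀ k : ℤ, ω (k + M) - ω k ≥ M * γ')
    (a b : ℝ) (hab : a < b) :
    ∃ C : ℝ, 0 < C ∧
      ∀ (m : ℤ) (j : ℕ), 1 ≤ j → j ≤ M →
        γ' ≤ ω m - ω (m - 1) →
        (∀ i : ℕ, 1 ≤ i → i ≤ j - 1 → ω (m + i) - ω (m + i - 1) < γ') →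
        γ' ≤ ω (m + j) - ω (m + j - 1) →
        ∀ p : ℕ, p < j →
          ∀ n : ℤ, 2 * Real.pi / (b - a) * n ≠ ω (m + p) →
            ‖∫ t in Set.Ioo a b,
                divDiff t ((List.range (p + 1)).map (fun i => ω (m + i))) *
                  Complex.exp (-Complex.I * (2 * Real.pi / (b - a) * n) * t)‖ ≤
              C / |ω (m + p) - 2 * Real.pi / (b - a) * n| := by
  have hba : (0:ℝ) < b - a := sub_pos.2 hab
  refine ⟨(2 + (b - a)) * (1 + max |a| |b|) ^ M, by positivity, ?_⟩
  intro m j hj1 hjM _ _ _ p hp n hne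
  simp only [bind_pure_comp, List.map_eq_map, List.map_map, Function.comp_def] at *
  set g : ℕ → ℝ := fun i => ω (m + (i:ℤ)) with hgdef
  set δ : ℝ := ω (m + (p:ℤ)) - 2 * Real.pi / (b - a) * (n:ℤ) with hδdef
  have hδ : δ ≠ 0 := by
    rw [hδdef]
    exact sub_ne_zero_of_ne (Ne.symm hne)
  have hpM : p + 1 ≤ M := by omega
  set R : ℝ := max |a| |b| with hRdef
  have hR0 : (0:ℝ) ≤ R := le_trans (abs_nonneg a) (le_max_left _ _)
  set B : ℝ := (1 + R) ^ M with hBdef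
  have hB0 : (0:ℝ) ≤ B := by positivity
  have hbound : ∀ k : ℕ, k ≤ M → ∀ t ∈ Set.Icc a b,
      ‖divDiff t ((List.range k).map g)‖ ≤ B := by
    intro k hk t ht
    have h1 := divDiff_norm g k t
    have htR : |t| ≤ R := by
      rw [abs_le]
      constructor
      · have h2 : -R ≤ -|a| := neg_le_neg (le_max_left _ _)
        have h3 : -|a| ≤ a := neg_abs_le a
        linarith [ht.1]
      · exact le_trans ht.2 (le_trans (le_abs_self b) (le_max_right _ _))
    have h2 : (1 + |t|) ^ k ≤ (1 + R) ^ k :=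
      pow_le_pow_left₀ (by positivity) (by linarith) k
    have h3 : (1 + R) ^ k ≤ (1 + R) ^ M := pow_le_pow_right₀ (by linarith) hk
    rw [hBdef]
    linarith
  have hioo : ∀ f : ℝ → ℂ, (∫ t in Set.Ioo a b, f t) = ∫ t in a..b, f t := by
    intro f
    rw [intervalIntegral.integral_of_le hab.le, MeasureTheory.integral_Ioc_eq_integral_Ioo]
  rw [hioo]
  have hsplit : Set.EqOn
      (fun t : ℝ => divDiff t ((List.range (p + 1)).map g)
        * Complex.exp (-Complex.I * (2 * Real.pi / (b - a) * (n:ℤ)) * t))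
      (fun t : ℝ => (divDiff t ((List.range (p + 1)).map g)
        * Complex.exp (-Complex.I * (g p) * t)) * Complex.exp (Complex.I * δ * t))
      (Set.uIcc a b) := by
    intro t _
    simp only
    conv_rhs => rw [mul_assoc, ← Complex.exp_add]
    congr 2
    rw [hδdef]
    simp only [hgdef]
    push_cast
    ring
  rw [intervalIntegral.integral_congr hsplit]
  have hexp2 : Continuous fun u : ℝ => Complex.exp (-Complex.I * (g p : ℝ) * u) := by
    fun_prop
  have hGc : Continuous fun u : ℝ =>
      Complex.I * divDiff u ((List.range p).map g) * Complex.exp (-Complex.I * (g p) * u) :=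
    (continuous_const.mul (divDiff_cont g p)).mul hexp2
  have hFb : ∀ t ∈ Set.Icc a b,
      ‖divDiff t ((List.range (p+1)).map g) * Complex.exp (-Complex.I * (g p) * t)‖ ≤ B := by
    intro t ht
    rw [norm_mul, norm_exp_negIxt, mul_one]
    exact hbound (p+1) hpM t ht
  have hGb : ∀ t ∈ Set.Icc a b,
      ‖Complex.I * divDiff t ((List.range p).map g)
        * Complex.exp (-Complex.I * (g p) * t)‖ ≤ B := by
    intro t ht
    rw [norm_mul, norm_mul, Complex.norm_I, one_mul, norm_exp_negIxt, mul_one]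
    exact hbound p (by omega) t ht
  have hmain := ibp_bound (a := a) (b := b) hab.le hδ hB0
      (fun t => hasDerivAt_divDiff g p t) hGc hFb hGb
  refine le_trans hmain ?_
  rw [show 2 * B + (b - a) * B = (2 + (b - a)) * B from by ring]
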